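/- Let R, B, b, h, v, T₁ and φ₂ be as in the context, where B carries an involution x ↦ x̄ satisfying b(v t) = (b t)̄ for all t ∈ R. Then for every t ∈ R: (T₁ − id)(φ₂ δ_t) = (Σ_{s : b(s) = b(h t)} δ_s − Σ_{s : b(s) = (b(h t))̄} δ_s) − (Σ_{s : b(s) = b(t)} δ_s − Σ_{s : b(s) = (b(t))̄} δ_s). -/
import Mathlib


open Finsupp

/-- **Key computation in the commutative diagram lemma:** for every `t`,
`(T₁ − id)(φ₂ δ_t)` equals the signed sum of fibers of `b` over
`b(h t)`, its bar, `b(t)` and its bar. -/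
theorem stmt_8
    {R B : Type*} [Fintype R] [Fintype B]
    [DecidableEq R] [DecidableEq B]
    (b : R → B) (h v : R → R)
    (hh : ∀ t, h (h t) = t) (hv : ∀ t, v (v t) = t)
    (hcomm : ∀ t, h (v t) = v (h t))
    (T₁ : (R →₀ ℤ) →ₗ[ℤ] (R →₀ ℤ))
    (hT₁ : ∀ t : R, T₁ (single t 1) =
      (∑ s ∈ Finset.univ.filter fun s => b s = b (h t), single s (1 : ℤ)) - single (h t) 1)
    (φ₂ : (R →₀ ℤ) →ₗ[ℤ] (R →₀ ℤ))
    (hφ₂ : ∀ t : R, φ₂ (single t 1) =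
      single t 1 - single (v t) 1 - single (h t) 1 + single (h (v t)) 1)
    (barB : B → B) (hbarB : ∀ x, barB (barB x) = x)
    (hbv : ∀ t, b (v t) = barB (b t)) :
    ∀ t : R, (T₁ - LinearMap.id : (R →₀ ℤ) →ₗ[ℤ] (R →₀ ℤ)) (φ₂ (single t 1)) =
      ((∑ s ∈ Finset.univ.filter fun s => b s = b (h t), single s (1 : ℤ)) -
        ∑ s ∈ Finset.univ.filter fun s => b s = barB (b (h t)), single s (1 : ℤ)) -
      ((∑ s ∈ Finset.univ.filter fun s => b s = b t, single s (1 : ℤ)) -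
        ∑ s ∈ Finset.univ.filter fun s => b s = barB (b t), single s (1 : ℤ)) := by
  intro t
  simp only [LinearMap.sub_apply, LinearMap.id_apply, hφ₂, map_sub, map_add, hT₁, hh,
    hcomm, hbv]
  abel
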